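/- For every integer n ≥ 3, there does not exist a random assignment mechanism that is simultaneously strategy-proof, envy-free, and ex-post efficient. -/

import Mathlib

open Finset

/-- A preference over `n` objects, encoded by its rank function:
`r a` is the (0-based) rank of object `a`; object `a` is strictly preferred to `b`
iff `r a < r b`.  The `k`-th ranked object (0-based) is `r.symm k`. -/
abbrev Pref (n : ℕ) := Fin n ≃ Fin n

/-- The total probability that allocation `p` assigns to the upper contour set of `a`
(the objects weakly preferred to `a`) under preference `r`. -/
def upperSum {n : ℕ} (r : Pref n) (p : Fin n → ℝ) (a : Fin n) : ℝ :=
  ∑ o ∈ Finset.univ.filter (fun o => r o ≤ r a), p o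

/-- First-order stochastic dominance of `p` over `q` with respect to preference `r`. -/
def StochDom {n : ℕ} (r : Pref n) (p q : Fin n → ℝ) : Prop :=
  ∀ a : Fin n, upperSum r q a ≤ upperSum r p a

/-- A random assignment: a doubly stochastic matrix. -/
def IsRandomAssignment {n : ℕ} (P : Matrix (Fin n) (Fin n) ℝ) : Prop :=
  (∀ i a, 0 ≤ P i a) ∧ (∀ i, ∑ a, P i a = 1) ∧ (∀ a, ∑ i, P i a = 1)

/-- A mechanism maps every preference profile to a random assignment. -/
def IsMechanism {n : ℕ} (φ : (Fin n → Pref n) → Matrix (Fin n) (Fin n) ℝ) : Prop :=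
  ∀ prof, IsRandomAssignment (φ prof)

/-- Strategy-proofness: no agent can ever benefit (in the stochastic dominance sense)
from misreporting her preference. -/
def StrategyProof {n : ℕ} (φ : (Fin n → Pref n) → Matrix (Fin n) (Fin n) ℝ) : Prop :=
  ∀ (prof : Fin n → Pref n) (i : Fin n) (r' : Pref n),
    StochDom (prof i) (φ prof i) (φ (Function.update prof i r') i)

/-- Envy-freeness: each agent's allocation stochastically dominates every other
agent's allocation with respect to her own preference. -/
def EnvyFree {n : ℕ} (φ : (Fin n → Pref n) → Matrix (Fin n) (Fin n) ℝ) : Prop :=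
  ∀ (prof : Fin n → Pref n) (i j : Fin n), StochDom (prof i) (φ prof i) (φ prof j)

/-- A deterministic assignment `μ` (a bijection from agents to objects) is
Pareto-optimal at profile `prof`. -/
def ParetoOptimal {n : ℕ} (prof : Fin n → Pref n) (μ : Equiv.Perm (Fin n)) : Prop :=
  ¬ ∃ ν : Equiv.Perm (Fin n),
      (∀ i, prof i (ν i) ≤ prof i (μ i)) ∧ ∃ i, prof i (ν i) < prof i (μ i)

/-- Ex-post efficiency: at every profile the random assignment is a convex
combination of permutation matrices of Pareto-optimal deterministic assignments. -/
def ExPostEfficient {n : ℕ} (φ : (Fin n → Pref n) → Matrix (Fin n) (Fin n) ℝ) : Prop :=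
  ∀ prof : Fin n → Pref n, ∃ w : Equiv.Perm (Fin n) → ℝ,
    (∀ μ, 0 ≤ w μ) ∧ (∑ μ, w μ = 1) ∧
    (∀ μ, w μ ≠ 0 → ParetoOptimal prof μ) ∧
    ∀ i a, φ prof i a = ∑ μ : Equiv.Perm (Fin n), w μ * (if μ i = a then 1 else 0)

namespace BM

/-- 3-agent Pareto optimality (over `Fin 3`). -/
def Small3PO (π : Fin 3 → Equiv.Perm (Fin 3)) (σ : Equiv.Perm (Fin 3)) : Prop :=
  ¬ ∃ τ : Equiv.Perm (Fin 3),
      (∀ i, π i (τ i) ≤ π i (σ i)) ∧ ∃ i, π i (τ i) < π i (σ i)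

instance (π : Fin 3 → Equiv.Perm (Fin 3)) (σ : Equiv.Perm (Fin 3)) :
    Decidable (Small3PO π σ) := by unfold Small3PO; infer_instance

variable {m : ℕ}

/-- Preference on `Fin (3+m)` ranking the first 3 objects on top (ordered by `π`),
then the remaining objects in their natural order. -/
def small (m : ℕ) (π : Equiv.Perm (Fin 3)) : Pref (3 + m) :=
  finSumFinEquiv.symm.trans ((Equiv.sumCongr π (Equiv.refl (Fin m))).trans finSumFinEquiv)

/-- Preference on `Fin (3+m)` ranking the last `m` objects on top (natural order),
then the first 3 objects. -/
def big (m : ℕ) : Pref (3 + m) :=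
  finSumFinEquiv.symm.trans ((Equiv.sumComm (Fin 3) (Fin m)).trans
    (finSumFinEquiv.trans (finCongr (Nat.add_comm m 3))))

@[simp] lemma small_castAdd (π : Equiv.Perm (Fin 3)) (i : Fin 3) :
    small m π (Fin.castAdd m i) = Fin.castAdd m (π i) := by
  simp [small, Equiv.sumCongr_apply]

@[simp] lemma small_natAdd (π : Equiv.Perm (Fin 3)) (k : Fin m) :
    small m π (Fin.natAdd 3 k) = Fin.natAdd 3 k := by
  simp [small, Equiv.sumCongr_apply]

@[simp] lemma big_castAdd_val (i : Fin 3) :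
    (big m (Fin.castAdd m i) : Fin (3 + m)).val = m + i.val := by
  simp [big]
  omega

@[simp] lemma big_natAdd_val (k : Fin m) :
    (big m (Fin.natAdd 3 k) : Fin (3 + m)).val = k.val := by
  simp [big]

/-- The profile where the first three agents have `small` preferences given by `π`
and the remaining agents all have the `big` preference. -/
def prof3 (m : ℕ) (π : Fin 3 → Equiv.Perm (Fin 3)) : Fin (3 + m) → Pref (3 + m) :=
  Fin.addCases (fun i => small m (π i)) (fun _ => big m)

@[simp] lemma prof3_castAdd (π : Fin 3 → Equiv.Perm (Fin 3)) (i : Fin 3) :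
    prof3 m π (Fin.castAdd m i) = small m (π i) := by
  simp [prof3]

@[simp] lemma prof3_natAdd (π : Fin 3 → Equiv.Perm (Fin 3)) (k : Fin m) :
    prof3 m π (Fin.natAdd 3 k) = big m := by
  simp [prof3]

lemma decomp (x : Fin (3 + m)) :
    (∃ i : Fin 3, x = Fin.castAdd m i) ∨ ∃ k : Fin m, x = Fin.natAdd 3 k := by
  induction x using Fin.addCases with
  | left i => exact Or.inl ⟨i, rfl⟩
  | right k => exact Or.inr ⟨k, rfl⟩

lemma castAdd_ne_natAdd (i : Fin 3) (k : Fin m) :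
    Fin.castAdd m i ≠ Fin.natAdd 3 k := by
  intro h
  have := congrArg Fin.val h
  simp at this
  omega

lemma castAdd_inj : Function.Injective (Fin.castAdd m : Fin 3 → Fin (3 + m)) := by
  intro x y h
  have := congrArg Fin.val h
  simpa [Fin.ext_iff] using this

lemma update_prof3 (π : Fin 3 → Equiv.Perm (Fin 3)) (i : Fin 3) (π' : Equiv.Perm (Fin 3)) :
    Function.update (prof3 m π) (Fin.castAdd m i) (small m π')
      = prof3 m (Function.update π i π') := by
  funext x
  induction x using Fin.addCases with
  | left j =>
    by_cases hji : j = i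
    · subst hji
      rw [Function.update_self, prof3_castAdd, Function.update_self]
    · rw [Function.update_of_ne (fun h => hji (castAdd_inj h)), prof3_castAdd,
        prof3_castAdd, Function.update_of_ne hji]
  | right k =>
    rw [Function.update_of_ne (fun h => castAdd_ne_natAdd i k h.symm), prof3_natAdd, prof3_natAdd]

lemma upperSum_small (π : Equiv.Perm (Fin 3)) (p : Fin (3 + m) → ℝ) (a : Fin 3) :
    upperSum (small m π) p (Fin.castAdd m a)
      = ∑ o ∈ univ.filter (fun o : Fin 3 => π o ≤ π a), p (Fin.castAdd m o) := by
  rw [upperSum, Finset.sum_filter, Finset.sum_filter, Fin.sum_univ_add]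
  have h2 : ∀ k : Fin m,
      (if small m π (Fin.natAdd 3 k) ≤ small m π (Fin.castAdd m a)
        then p (Fin.natAdd 3 k) else 0) = 0 := by
    intro k
    rw [if_neg]
    rw [small_natAdd, small_castAdd, Fin.le_def]
    simp only [Fin.coe_natAdd, Fin.coe_castAdd]
    have := (π a).isLt
    omega
  rw [Finset.sum_congr rfl (fun k _ => h2 k), Finset.sum_const_zero, add_zero]
  refine Finset.sum_congr rfl (fun o _ => ?_)
  congr 1
  rw [small_castAdd, small_castAdd]
  rw [Fin.le_def, Fin.le_def]
  simp only [Fin.coe_castAdd]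


lemma big_to_big (π : Fin 3 → Equiv.Perm (Fin 3)) (μ : Equiv.Perm (Fin (3 + m)))
    (hPO : ParetoOptimal (prof3 m π) μ) (k : Fin m) :
    ∃ k', μ (Fin.natAdd 3 k) = Fin.natAdd 3 k' := by
  by_contra h
  push_neg at h
  obtain ⟨a, ha⟩ : ∃ a : Fin 3, μ (Fin.natAdd 3 k) = Fin.castAdd m a := by
    rcases decomp (μ (Fin.natAdd 3 k)) with ⟨a, ha⟩ | ⟨k', hk'⟩
    · exact ⟨a, ha⟩
    · exact absurd hk' (h k')
  obtain ⟨j, k'', hj⟩ : ∃ (j : Fin 3) (k'' : Fin m), μ (Fin.castAdd m j) = Fin.natAdd 3 k'' := by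
    by_contra h2
    push_neg at h2
    have hf : ∀ j : Fin 3, ∃ b : Fin 3, μ (Fin.castAdd m j) = Fin.castAdd m b := by
      intro j
      rcases decomp (μ (Fin.castAdd m j)) with ⟨b, hb⟩ | ⟨k', hk'⟩
      · exact ⟨b, hb⟩
      · exact absurd hk' (h2 j k')
    choose f hfeq using hf
    have hinj : Function.Injective f := by
      intro x y hxy
      apply castAdd_inj (μ.injective ?_)
      rw [hfeq x, hfeq y, hxy]
    obtain ⟨j, hja⟩ := (Finite.injective_iff_surjective.mp hinj) a
    have : μ (Fin.castAdd m j) = μ (Fin.natAdd 3 k) := by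
      rw [hfeq j, hja, ha]
    exact castAdd_ne_natAdd j k (μ.injective this)
  apply hPO
  refine ⟨(Equiv.swap (Fin.castAdd m j) (Fin.natAdd 3 k)).trans μ, ?_, ⟨Fin.natAdd 3 k, ?_⟩⟩
  · intro x
    rcases decomp x with ⟨i, rfl⟩ | ⟨k', rfl⟩
    · by_cases hij : i = j
      · subst hij
        simp only [Equiv.trans_apply, Equiv.swap_apply_left, prof3_castAdd]
        rw [ha, hj, small_castAdd, Fin.le_def, small_natAdd]
        simp only [Fin.coe_castAdd, Fin.coe_natAdd]
        have := (π i a).isLt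
        omega
      · rw [Equiv.trans_apply,
          Equiv.swap_apply_of_ne_of_ne (fun hh => hij (castAdd_inj hh)) (castAdd_ne_natAdd i k)]
    · by_cases hk : k' = k
      · subst hk
        simp only [Equiv.trans_apply, Equiv.swap_apply_right, prof3_natAdd]
        rw [ha, hj, Fin.le_def, big_natAdd_val, big_castAdd_val]
        have := k''.isLt
        omega
      · rw [Equiv.trans_apply,
          Equiv.swap_apply_of_ne_of_ne (fun hh => castAdd_ne_natAdd j k' hh.symm)
            (fun hh => hk (by simpa [Fin.ext_iff] using congrArg Fin.val hh))]
  · simp only [Equiv.trans_apply, Equiv.swap_apply_right, prof3_natAdd]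
    rw [ha, hj, Fin.lt_def, big_natAdd_val, big_castAdd_val]
    have := k''.isLt
    omega

lemma small_to_small (π : Fin 3 → Equiv.Perm (Fin 3)) (μ : Equiv.Perm (Fin (3 + m)))
    (hPO : ParetoOptimal (prof3 m π) μ) (i : Fin 3) :
    ∃ a, μ (Fin.castAdd m i) = Fin.castAdd m a := by
  rcases decomp (μ (Fin.castAdd m i)) with ⟨a, ha⟩ | ⟨k₀, hk₀⟩
  · exact ⟨a, ha⟩
  · exfalso
    choose g hg using big_to_big π μ hPO
    have hinj : Function.Injective g := by
      intro x y hxy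
      have : μ (Fin.natAdd 3 x) = μ (Fin.natAdd 3 y) := by rw [hg x, hg y, hxy]
      have := congrArg Fin.val (μ.injective this)
      simpa [Fin.ext_iff] using this
    obtain ⟨k, hk⟩ := (Finite.injective_iff_surjective.mp hinj) k₀
    have : μ (Fin.castAdd m i) = μ (Fin.natAdd 3 k) := by rw [hk₀, hg k, hk]
    exact castAdd_ne_natAdd i k (μ.injective this)

lemma po_structure (π : Fin 3 → Equiv.Perm (Fin 3)) (μ : Equiv.Perm (Fin (3 + m)))
    (hPO : ParetoOptimal (prof3 m π) μ) :
    ∃ σ : Equiv.Perm (Fin 3), Small3PO π σ ∧ ∀ i, μ (Fin.castAdd m i) = Fin.castAdd m (σ i) := by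
  choose f hf using small_to_small π μ hPO
  have hinj : Function.Injective f := by
    intro x y hxy
    apply castAdd_inj (μ.injective ?_)
    rw [hf x, hf y, hxy]
  let σ : Equiv.Perm (Fin 3) := Equiv.ofBijective f (Finite.injective_iff_bijective.mp hinj)
  have hσf : ∀ i, σ i = f i := fun i => rfl
  refine ⟨σ, ?_, fun i => by rw [hf i, hσf i]⟩
  rintro ⟨τ, hle, i₀, hlt⟩
  apply hPO
  refine ⟨μ.trans (small m (τ * σ⁻¹)), ?_, ⟨Fin.castAdd m i₀, ?_⟩⟩
  · intro x
    rcases decomp x with ⟨i, rfl⟩ | ⟨k, rfl⟩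
    · rw [Equiv.trans_apply, hf i, ← hσf i, small_castAdd, prof3_castAdd,
        Equiv.Perm.mul_apply, Equiv.Perm.inv_def, Equiv.symm_apply_apply, small_castAdd, small_castAdd,
        Fin.le_def]
      simp only [Fin.coe_castAdd]
      exact hle i
    · obtain ⟨k', hk'⟩ := big_to_big π μ hPO k
      rw [Equiv.trans_apply, hk', small_natAdd]
  · rw [Equiv.trans_apply, hf i₀, ← hσf i₀, small_castAdd, prof3_castAdd,
      Equiv.Perm.mul_apply, Equiv.Perm.inv_def, Equiv.symm_apply_apply, small_castAdd, small_castAdd,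
      Fin.lt_def]
    simp only [Fin.coe_castAdd]
    exact hlt


section Mech

variable (φ : (Fin (3 + m) → Pref (3 + m)) → Matrix (Fin (3 + m)) (Fin (3 + m)) ℝ)

/-- The probability that small agent `i` gets small object `a` at the embedded profile. -/
def E (π : Fin 3 → Equiv.Perm (Fin 3)) (i a : Fin 3) : ℝ :=
  φ (prof3 m π) (Fin.castAdd m i) (Fin.castAdd m a)

lemma expost_zero (hexp : ExPostEfficient φ) (π : Fin 3 → Equiv.Perm (Fin 3))
    (x y : Fin (3 + m))
    (h : ∀ μ : Equiv.Perm (Fin (3 + m)), ParetoOptimal (prof3 m π) μ → μ x ≠ y) :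
    φ (prof3 m π) x y = 0 := by
  obtain ⟨w, hw0, _, hwPO, hrep⟩ := hexp (prof3 m π)
  rw [hrep]
  refine Finset.sum_eq_zero fun μ _ => ?_
  by_cases hw : w μ = 0
  · rw [hw, zero_mul]
  · rw [if_neg (h μ (hwPO μ hw)), mul_zero]

lemma zero_small (hexp : ExPostEfficient φ) (π : Fin 3 → Equiv.Perm (Fin 3)) (i a : Fin 3)
    (h : ∀ σ : Equiv.Perm (Fin 3), Small3PO π σ → σ i ≠ a) :
    E φ π i a = 0 := by
  apply expost_zero φ hexp
  intro μ hPO hμ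
  obtain ⟨σ, hσPO, hσ⟩ := po_structure π μ hPO
  rw [hσ i] at hμ
  exact h σ hσPO (castAdd_inj hμ)

lemma zero_small_big (hexp : ExPostEfficient φ) (π : Fin 3 → Equiv.Perm (Fin 3))
    (i : Fin 3) (k : Fin m) :
    φ (prof3 m π) (Fin.castAdd m i) (Fin.natAdd 3 k) = 0 := by
  apply expost_zero φ hexp
  intro μ hPO hμ
  obtain ⟨σ, _, hσ⟩ := po_structure π μ hPO
  rw [hσ i] at hμ
  exact castAdd_ne_natAdd (σ i) k hμ

lemma zero_big_small (hexp : ExPostEfficient φ) (π : Fin 3 → Equiv.Perm (Fin 3))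
    (k : Fin m) (a : Fin 3) :
    φ (prof3 m π) (Fin.natAdd 3 k) (Fin.castAdd m a) = 0 := by
  apply expost_zero φ hexp
  intro μ hPO hμ
  obtain ⟨k', hk'⟩ := big_to_big π μ hPO k
  rw [hk'] at hμ
  exact castAdd_ne_natAdd a k' hμ.symm

lemma row3 (hmech : IsMechanism φ) (hexp : ExPostEfficient φ)
    (π : Fin 3 → Equiv.Perm (Fin 3)) (i : Fin 3) :
    ∑ a : Fin 3, E φ π i a = 1 := by
  have h := (hmech (prof3 m π)).2.1 (Fin.castAdd m i)
  rw [Fin.sum_univ_add] at h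
  have h2 : ∑ k : Fin m, φ (prof3 m π) (Fin.castAdd m i) (Fin.natAdd 3 k) = 0 :=
    Finset.sum_eq_zero fun k _ => zero_small_big φ hexp π i k
  rw [h2, add_zero] at h
  exact h

lemma col3 (hmech : IsMechanism φ) (hexp : ExPostEfficient φ)
    (π : Fin 3 → Equiv.Perm (Fin 3)) (a : Fin 3) :
    ∑ i : Fin 3, E φ π i a = 1 := by
  have h := (hmech (prof3 m π)).2.2 (Fin.castAdd m a)
  rw [Fin.sum_univ_add] at h
  have h2 : ∑ k : Fin m, φ (prof3 m π) (Fin.natAdd 3 k) (Fin.castAdd m a) = 0 :=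
    Finset.sum_eq_zero fun k _ => zero_big_small φ hexp π k a
  rw [h2, add_zero] at h
  exact h

lemma ef3 (hef : EnvyFree φ) (π : Fin 3 → Equiv.Perm (Fin 3)) (i j a : Fin 3) :
    ∑ o ∈ univ.filter (fun o : Fin 3 => π i o ≤ π i a), E φ π j o
      ≤ ∑ o ∈ univ.filter (fun o : Fin 3 => π i o ≤ π i a), E φ π i o := by
  have h := hef (prof3 m π) (Fin.castAdd m i) (Fin.castAdd m j) (Fin.castAdd m a)
  rw [prof3_castAdd, upperSum_small, upperSum_small] at h
  exact h

lemma sp3 (hsp : StrategyProof φ) (π : Fin 3 → Equiv.Perm (Fin 3)) (i : Fin 3)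
    (π' : Equiv.Perm (Fin 3)) (a : Fin 3) :
    ∑ o ∈ univ.filter (fun o : Fin 3 => π i o ≤ π i a), E φ (Function.update π i π') i o
      ≤ ∑ o ∈ univ.filter (fun o : Fin 3 => π i o ≤ π i a), E φ π i o := by
  have h := hsp (prof3 m π) (Fin.castAdd m i) (small m π') (Fin.castAdd m a)
  rw [update_prof3, prof3_castAdd] at h
  have h2 := h
  rw [upperSum_small, upperSum_small] at h2
  exact h2

end Mech


/-- abc preference: a ≻ b ≻ c is the identity rank function. -/
def acb : Equiv.Perm (Fin 3) := Equiv.swap 1 2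
def bac : Equiv.Perm (Fin 3) := Equiv.swap 0 1

def pA : Fin 3 → Equiv.Perm (Fin 3) := ![1, 1, bac]
def pB : Fin 3 → Equiv.Perm (Fin 3) := ![1, acb, bac]
def pC : Fin 3 → Equiv.Perm (Fin 3) := ![1, acb, 1]

lemma no_mech (m : ℕ) (φ : (Fin (3 + m) → Pref (3 + m)) → Matrix (Fin (3 + m)) (Fin (3 + m)) ℝ)
    (hmech : IsMechanism φ) (hsp : StrategyProof φ) (hef : EnvyFree φ)
    (hexp : ExPostEfficient φ) : False := by
  -- filter computations
  have fA0 : (univ.filter fun o : Fin 3 => pA 0 o ≤ pA 0 0) = {0} := by decide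
  have fA1 : (univ.filter fun o : Fin 3 => pA 1 o ≤ pA 1 0) = {0} := by decide
  have fB1 : (univ.filter fun o : Fin 3 => pB 1 o ≤ pB 1 0) = {0} := by decide
  have fB0b : (univ.filter fun o : Fin 3 => pB 0 o ≤ pB 0 1) = {0, 1} := by decide
  have fB2 : (univ.filter fun o : Fin 3 => pB 2 o ≤ pB 2 0) = {0, 1} := by decide
  have fC0a : (univ.filter fun o : Fin 3 => pC 0 o ≤ pC 0 0) = {0} := by decide
  have fC2a : (univ.filter fun o : Fin 3 => pC 2 o ≤ pC 2 0) = {0} := by decide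
  have fC0b : (univ.filter fun o : Fin 3 => pC 0 o ≤ pC 0 1) = {0, 1} := by decide
  have fC2b : (univ.filter fun o : Fin 3 => pC 2 o ≤ pC 2 1) = {0, 1} := by decide
  have hne : (0 : Fin 3) ≠ 1 := by decide
  -- profile updates
  have uAB : Function.update pA 1 acb = pB := by decide
  have uBA : Function.update pB 1 1 = pA := by decide
  have uBC : Function.update pB 2 1 = pC := by decide
  -- Profile A = (abc, abc, bac) facts
  have hA1 : E φ pA 2 0 = 0 := zero_small φ hexp pA 2 0 (by decide)
  have hcolA : E φ pA 0 0 + E φ pA 1 0 + E φ pA 2 0 = 1 := by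
    have h := col3 φ hmech hexp pA 0
    rwa [Fin.sum_univ_three] at h
  have hA2 : E φ pA 1 0 ≤ E φ pA 0 0 := by
    have h := ef3 φ hef pA 0 1 0
    rwa [fA0, Finset.sum_singleton, Finset.sum_singleton] at h
  have hA3 : E φ pA 0 0 ≤ E φ pA 1 0 := by
    have h := ef3 φ hef pA 1 0 0
    rwa [fA1, Finset.sum_singleton, Finset.sum_singleton] at h
  -- SP link between A and B (agent 1 switching between abc and acb)
  have hS1 : E φ pB 1 0 ≤ E φ pA 1 0 := by
    have h := sp3 φ hsp pA 1 acb 0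
    rw [uAB] at h
    rwa [fA1, Finset.sum_singleton, Finset.sum_singleton] at h
  have hS2 : E φ pA 1 0 ≤ E φ pB 1 0 := by
    have h := sp3 φ hsp pB 1 1 0
    rw [uBA] at h
    rwa [fB1, Finset.sum_singleton, Finset.sum_singleton] at h
  -- Profile B = (abc, acb, bac) facts
  have hB1 : E φ pB 2 0 = 0 := zero_small φ hexp pB 2 0 (by decide)
  have hcolBa : E φ pB 0 0 + E φ pB 1 0 + E φ pB 2 0 = 1 := by
    have h := col3 φ hmech hexp pB 0
    rwa [Fin.sum_univ_three] at h
  have hcolBb : E φ pB 0 1 + E φ pB 1 1 + E φ pB 2 1 = 1 := by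
    have h := col3 φ hmech hexp pB 1
    rwa [Fin.sum_univ_three] at h
  have hB3 : E φ pB 2 0 + E φ pB 2 1 ≤ E φ pB 0 0 + E φ pB 0 1 := by
    have h := ef3 φ hef pB 0 2 1
    rwa [fB0b, Finset.sum_pair hne, Finset.sum_pair hne] at h
  have hB4 : E φ pB 0 0 + E φ pB 0 1 ≤ E φ pB 2 0 + E φ pB 2 1 := by
    have h := ef3 φ hef pB 2 0 0
    rwa [fB2, Finset.sum_pair hne, Finset.sum_pair hne] at h
  have hB6 : 0 ≤ E φ pB 1 1 := (hmech (prof3 m pB)).1 _ _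
  -- SP link between B and C (agent 2 switching from bac to abc)
  have hS3 : E φ pC 2 0 + E φ pC 2 1 ≤ E φ pB 2 0 + E φ pB 2 1 := by
    have h := sp3 φ hsp pB 2 1 0
    rw [uBC] at h
    rwa [fB2, Finset.sum_pair hne, Finset.sum_pair hne] at h
  -- Profile C = (abc, acb, abc) facts
  have hC1 : E φ pC 1 1 = 0 := zero_small φ hexp pC 1 1 (by decide)
  have hC2a : E φ pC 2 0 ≤ E φ pC 0 0 := by
    have h := ef3 φ hef pC 0 2 0
    rwa [fC0a, Finset.sum_singleton, Finset.sum_singleton] at h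
  have hC2b : E φ pC 0 0 ≤ E φ pC 2 0 := by
    have h := ef3 φ hef pC 2 0 0
    rwa [fC2a, Finset.sum_singleton, Finset.sum_singleton] at h
  have hC3a : E φ pC 2 0 + E φ pC 2 1 ≤ E φ pC 0 0 + E φ pC 0 1 := by
    have h := ef3 φ hef pC 0 2 1
    rwa [fC0b, Finset.sum_pair hne, Finset.sum_pair hne] at h
  have hC3b : E φ pC 0 0 + E φ pC 0 1 ≤ E φ pC 2 0 + E φ pC 2 1 := by
    have h := ef3 φ hef pC 2 0 1
    rwa [fC2b, Finset.sum_pair hne, Finset.sum_pair hne] at h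
  have hC5 : E φ pC 1 0 ≤ E φ pC 0 0 := by
    have h := ef3 φ hef pC 0 1 0
    rwa [fC0a, Finset.sum_singleton, Finset.sum_singleton] at h
  have hcolCa : E φ pC 0 0 + E φ pC 1 0 + E φ pC 2 0 = 1 := by
    have h := col3 φ hmech hexp pC 0
    rwa [Fin.sum_univ_three] at h
  have hcolCb : E φ pC 0 1 + E φ pC 1 1 + E φ pC 2 1 = 1 := by
    have h := col3 φ hmech hexp pC 1
    rwa [Fin.sum_univ_three] at h
  linarith

end BM

/-- For any `n ≥ 3`, no mechanism is simultaneously strategy-proof, envy-free and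
ex-post efficient. -/
theorem no_sp_ef_expost_efficient (n : ℕ) (hn : 3 ≤ n) :
    ¬ ∃ φ : (Fin n → Pref n) → Matrix (Fin n) (Fin n) ℝ,
        IsMechanism φ ∧ StrategyProof φ ∧ EnvyFree φ ∧ ExPostEfficient φ := by
  obtain ⟨m, rfl⟩ : ∃ m, n = 3 + m := ⟨n - 3, by omega⟩
  rintro ⟨φ, hmech, hsp, hef, hexp⟩
  exact BM.no_mech m φ hmech hsp hef hexp
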